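/- For a connected Eulerian directed multigraph D, the number of spanning arborescences rooted at r is the same for every choice of root vertex r. -/

import Mathlib

/-- A finite directed multigraph. -/
structure Multidigraph where
  V : Type
  E : Type
  [fintypeV : Fintype V]
  [fintypeE : Fintype E]
  [decV : DecidableEq V]
  [decE : DecidableEq E]
  src : E → V
  tgt : E → V

attribute [instance] Multidigraph.fintypeV Multidigraph.fintypeE
  Multidigraph.decV Multidigraph.decE

namespace Multidigraph

variable (D : Multidigraph)

noncomputable def outdeg (v : D.V) : ℕ := {e | D.src e = v}.ncard
noncomputable def indeg (v : D.V) : ℕ := {e | D.tgt e = v}.ncard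

/-- Balanced (Eulerian): in-degree equals out-degree at every vertex. -/
def Balanced : Prop := ∀ v, D.indeg v = D.outdeg v

/-- Connectivity of the underlying undirected graph. -/
def Connected : Prop :=
  ∀ u w : D.V, Relation.ReflTransGen
    (fun a b => ∃ e, (D.src e = a ∧ D.tgt e = b) ∨ (D.src e = b ∧ D.tgt e = a)) u w

/-- One step along an edge of `T`. -/
def step (T : Set D.E) (u w : D.V) : Prop := ∃ e ∈ T, D.src e = u ∧ D.tgt e = w

/-- `T` is a spanning arborescence rooted at `r`: every non-root vertex has a
unique outgoing edge in `T`, the root has none, and every vertex reaches the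
root along `T`. -/
def IsArborescence (T : Set D.E) (r : D.V) : Prop :=
  (∀ v, v ≠ r → ∃! e, e ∈ T ∧ D.src e = v) ∧
  (∀ e ∈ T, D.src e ≠ r) ∧
  (∀ v, Relation.ReflTransGen (D.step T) v r)

/-- The arborescence number of `D` with respect to root `r`. -/
noncomputable def arbCount (r : D.V) : ℕ := {T : Set D.E | D.IsArborescence T r}.ncard

end Multidigraph


open Matrix Polynomial in
lemma det_one_sub_nilpotent {n : Type} [Fintype n] [DecidableEq n]
    (N : Matrix n n ℚ) (h : IsNilpotent N) : (1 - N).det = 1 := by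
  have h1 : N.charpoly = X ^ (Fintype.card n) := by
    have h2 := Matrix.isNilpotent_charpoly_sub_pow_of_isNilpotent h
    rw [← sub_eq_zero]
    exact h2.eq_zero
  have h3 : (N.charmatrix).map (Polynomial.evalRingHom 1) = 1 - N := by
    ext i j
    rcases eq_or_ne i j with rfl | hij
    · simp [Matrix.sub_apply, Matrix.one_apply]
    · simp [hij, Matrix.sub_apply, Matrix.one_apply]
  have h4 : Polynomial.eval 1 N.charpoly = (1 - N).det := by
    rw [Matrix.charpoly, ← coe_evalRingHom, RingHom.map_det, RingHom.mapMatrix_apply, h3]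
  rw [h1] at h4
  rw [← h4]; simp

open Matrix in
lemma cofactor_indep {V : Type} [Fintype V] [DecidableEq V] (L : Matrix V V ℚ)
    (hrow : ∀ u, ∑ w, L u w = 0) (hcol : ∀ w, ∑ u, L u w = 0) (r r' : V) :
    (L.submatrix (Subtype.val : {v // v ≠ r} → V) Subtype.val).det =
    (L.submatrix (Subtype.val : {v // v ≠ r'} → V) Subtype.val).det := by
  rcases eq_or_ne r r' with rfl | hne
  · rfl
  have key : ∀ (F : V → ℚ), (∑ x : V, F x = 0) → ∑ u : {v : V // v ≠ r}, F u.val = - F r := by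
    intro F hF
    have h1 : ∑ x ∈ Finset.univ.erase r, F x = ∑ u : {v : V // v ≠ r}, F u.val := by
      apply Finset.sum_subtype
      intro x
      simp
    have h2 : F r + ∑ x ∈ Finset.univ.erase r, F x = ∑ x : V, F x :=
      Finset.add_sum_erase _ _ (Finset.mem_univ r)
    rw [h1] at h2
    linarith [hF ▸ h2]
  set n := {v : V // v ≠ r} with hn
  let i : n := ⟨r', hne.symm⟩
  set A := L.submatrix (Subtype.val : n → V) Subtype.val with hA
  -- Step 1: row update
  set B1 := A.updateRow i (fun w => - L r w.val) with hB1
  have step1 : B1.det = A.det := by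
    have hfun : (fun w : n => - L r w.val) = ∑ k : n, (1:ℚ) • A k := by
      funext w
      have := key (fun u => L u w.val) (hcol w.val)
      simp only [one_smul]
      erw [Finset.sum_apply w Finset.univ (fun k : n => (A k : n → ℚ))]
      simpa [hA] using this.symm
    rw [hB1, hfun, Matrix.det_updateRow_sum A i (fun _ => (1:ℚ))]
    simp
  -- Step 2: column update
  set B2 := B1.updateCol i (fun u => if u = i then L r r else - L u.val r) with hB2
  have step2 : B2.det = B1.det := by
    have hfun : (fun u : n => if u = i then L r r else - L u.val r)
        = fun k => ∑ w : n, (1:ℚ) • B1 k w := by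
      funext k
      simp only [one_smul]
      rcases eq_or_ne k i with hk | hk
      · rw [if_pos hk, hk]
        have h1 : ∀ w : n, B1 i w = - L r w.val := by
          intro w
          rw [hB1, Matrix.updateRow_self]
        have h2 : ∑ u : n, L r u.val = - L r r := key (fun w => L r w) (hrow r)
        simp only [h1]
        rw [Finset.sum_neg_distrib, h2, neg_neg]
      · have h1 : ∀ w : n, B1 k w = L k.val w.val := by
          intro w
          rw [hB1, Matrix.updateRow_ne hk]; rfl
        have h2 := key (fun w => L k.val w) (hrow k.val)
        simp only [if_neg hk, h1]
        rw [h2]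
    rw [hB2, hfun, Matrix.det_updateCol_sum B1 i (fun _ => (1:ℚ))]
    simp
  -- Step 3: identify B2 with signed reindexed minor at r'
  let e : n → ℚ := fun u => if u = i then -1 else 1
  let σ : n → V := fun u => if u = i then r else u.val
  have hB2eq : B2 = Matrix.diagonal e * (L.submatrix σ σ) * Matrix.diagonal e := by
    ext u w
    rw [Matrix.mul_diagonal, Matrix.diagonal_mul]
    rw [hB2, Matrix.updateCol_apply]
    rcases eq_or_ne w i with rfl | hw
    · rcases eq_or_ne u i with rfl | hu
      · simp [e, σ]
      · simp [e, σ, hu]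
    · rw [if_neg hw, hB1, Matrix.updateRow_apply]
      rcases eq_or_ne u i with rfl | hu
      · simp [e, σ, hw]
      · simp [e, σ, hu, hw, hA]
  have hdiag : (Matrix.diagonal e).det * (Matrix.diagonal e).det = 1 := by
    rw [Matrix.det_diagonal, ← Finset.prod_mul_distrib]
    apply Finset.prod_eq_one
    intro u _
    by_cases hu : u = i <;> simp [e, hu]
  -- Step 4: reindex
  let τ : n ≃ {v : V // v ≠ r'} :=
    (Equiv.swap r r').subtypeEquiv (by
      intro v
      have hiff : Equiv.swap r r' v = r' ↔ v = r :=
        ⟨fun h => (Equiv.swap r r').injective (by rw [h, Equiv.swap_apply_left]),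
         fun h => by rw [h, Equiv.swap_apply_left]⟩
      exact not_congr hiff.symm)
  have hσ : σ = Subtype.val ∘ τ := by
    funext u
    simp only [σ, Function.comp_apply, τ, Equiv.subtypeEquiv_apply]
    rcases eq_or_ne u i with rfl | hu
    · rw [if_pos rfl]
      show r = Equiv.swap r r' (⟨r', hne.symm⟩ : n).val
      rw [Equiv.swap_apply_right]
    · have h1 : u.val ≠ r' := fun hc => hu (Subtype.ext hc)
      rw [if_neg hu]
      show u.val = Equiv.swap r r' u.val
      rw [Equiv.swap_apply_of_ne_of_ne u.prop h1]
  have final : (L.submatrix σ σ).det =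
      (L.submatrix (Subtype.val : {v : V // v ≠ r'} → V) Subtype.val).det := by
    rw [hσ, ← Matrix.submatrix_submatrix]
    exact Matrix.det_submatrix_equiv_self τ _
  calc A.det = B2.det := by rw [step2, step1]
    _ = _ := by
        rw [hB2eq, Matrix.det_mul, Matrix.det_mul, final]
        ring_nf
        rw [pow_two, hdiag, one_mul]

namespace ArbAux

open Multidigraph Finset

variable (D : Multidigraph)

/-- number of edges from `u` to `w` -/
def nE (u w : D.V) : ℕ := (Finset.univ.filter (fun e => D.src e = u ∧ D.tgt e = w)).card

/-- out-degree as a finset card -/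
def od (u : D.V) : ℕ := (Finset.univ.filter (fun e => D.src e = u)).card

/-- in-degree as a finset card -/
def idg (w : D.V) : ℕ := (Finset.univ.filter (fun e => D.tgt e = w)).card

lemma od_eq (u : D.V) : D.outdeg u = od D u := by
  rw [Multidigraph.outdeg, show {e | D.src e = u} =
    ↑(Finset.univ.filter (fun e => D.src e = u)) by ext e; simp]
  exact Set.ncard_coe_finset _

lemma idg_eq (w : D.V) : D.indeg w = idg D w := by
  rw [Multidigraph.indeg, show {e | D.tgt e = w} =
    ↑(Finset.univ.filter (fun e => D.tgt e = w)) by ext e; simp]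
  exact Set.ncard_coe_finset _

lemma sum_nE_tgt (u : D.V) : ∑ w : D.V, nE D u w = od D u := by
  rw [od, Finset.card_eq_sum_card_fiberwise (f := D.tgt) (t := Finset.univ)
    (fun e _ => Finset.mem_univ _)]
  apply Finset.sum_congr rfl
  intro w _
  rw [nE, Finset.filter_filter]

lemma sum_nE_src (w : D.V) : ∑ u : D.V, nE D u w = idg D w := by
  rw [idg, Finset.card_eq_sum_card_fiberwise (f := D.src) (t := Finset.univ)
    (fun e _ => Finset.mem_univ _)]
  apply Finset.sum_congr rfl
  intro u _
  rw [nE, Finset.filter_filter]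
  congr 1
  apply Finset.filter_congr
  intro e _
  simp [and_comm]

/-- The (out-degree) Laplacian of `D`, a rational matrix. -/
noncomputable def Lap : Matrix D.V D.V ℚ :=
  fun u w => (if u = w then (od D u : ℚ) else 0) - (nE D u w : ℚ)

lemma Lap_row_sum (u : D.V) : ∑ w : D.V, Lap D u w = 0 := by
  unfold Lap
  rw [Finset.sum_sub_distrib]
  rw [Finset.sum_ite_eq Finset.univ u (fun _ => (od D u : ℚ))]
  rw [← Nat.cast_sum, sum_nE_tgt]
  simp

lemma Lap_col_sum (hbal : D.Balanced) (w : D.V) : ∑ u : D.V, Lap D u w = 0 := by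
  unfold Lap
  rw [Finset.sum_sub_distrib]
  rw [Finset.sum_ite_eq' Finset.univ w (fun u => (od D u : ℚ))]
  rw [← Nat.cast_sum, sum_nE_src]
  have := hbal w
  rw [od_eq, idg_eq] at this
  simp [this]


variable (r : D.V)

/-- Out-edges of a non-root vertex. -/
def S (u : {v : D.V // v ≠ r}) : Finset D.E := Finset.univ.filter (fun e => D.src e = u.val)

/-- The successor function determined by a choice of out-edges. -/
noncomputable def gfun (f : {v : D.V // v ≠ r} → D.E) : D.V → D.V :=
  fun v => if h : v = r then r else D.tgt (f ⟨v, h⟩)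

/-- The choice `f` is "good" if every vertex eventually reaches the root. -/
def Good (f : {v : D.V // v ≠ r} → D.E) : Prop :=
  ∀ v : D.V, ∃ k : ℕ, (gfun D r f)^[k] v = r

/-- The elementary matrix attached to a choice of out-edges. -/
def Mf (f : {v : D.V // v ≠ r} → D.E) :
    Matrix {v : D.V // v ≠ r} {v : D.V // v ≠ r} ℚ :=
  Matrix.of fun u w => (if u = w then 1 else 0) - (if D.tgt (f u) = w.val then 1 else 0)

lemma gfun_root (f : {v : D.V // v ≠ r} → D.E) : gfun D r f r = r := dif_pos rfl

lemma gfun_ne (f : {v : D.V // v ≠ r} → D.E) (v : D.V) (h : v ≠ r) :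
    gfun D r f v = D.tgt (f ⟨v, h⟩) := dif_neg h

lemma gfun_iterate_root (f : {v : D.V // v ≠ r} → D.E) (k : ℕ) :
    (gfun D r f)^[k] r = r := Function.iterate_fixed (gfun_root D r f) k

lemma gfun_stay (f : {v : D.V // v ≠ r} → D.E) {k m : ℕ} {v : D.V}
    (h : (gfun D r f)^[k] v = r) (hkm : k ≤ m) : (gfun D r f)^[m] v = r := by
  have : (gfun D r f)^[(m - k) + k] v = (gfun D r f)^[m - k] ((gfun D r f)^[k] v) :=
    Function.iterate_add_apply _ _ _ _
  rw [Nat.sub_add_cancel hkm] at this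
  rw [this, h, gfun_iterate_root]

lemma gfun_card (f : {v : D.V // v ≠ r} → D.E) (hg : Good D r f) (v : D.V) :
    (gfun D r f)^[Fintype.card D.V] v = r := by
  set g := gfun D r f
  obtain ⟨k, hk⟩ := hg v
  rcases le_or_gt k (Fintype.card D.V) with h | h
  · exact gfun_stay D r f hk h
  -- strong induction: minimal hitting time is ≤ card
  by_contra hcon
  -- take the minimal hitting time
  have hex : ∃ k, g^[k] v = r := ⟨k, hk⟩
  set k0 := Nat.find hex with hk0
  have hk0spec : g^[k0] v = r := Nat.find_spec hex
  have hk0big : Fintype.card D.V < k0 := by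
    by_contra hle
    exact hcon (gfun_stay D r f hk0spec (le_of_not_gt hle))
  obtain ⟨a, b, hab, heq⟩ := Fintype.exists_ne_map_eq_of_card_lt
    (fun j : Fin (Fintype.card D.V + 1) => g^[(j : ℕ)] v) (by simp)
  wlog hlt : (a : ℕ) < (b : ℕ) generalizing a b
  · exact this b a hab.symm heq.symm
      (lt_of_le_of_ne (le_of_not_gt hlt) (fun hc => hab (Fin.ext hc.symm)))
  have hble : (b : ℕ) ≤ k0 := le_trans (Nat.le_of_lt_succ b.isLt) (le_of_lt hk0big)
  have hsmall : g^[k0 - (b : ℕ) + (a : ℕ)] v = r := by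
    have h1 : g^[k0 - (b : ℕ) + (a : ℕ)] v = g^[k0 - (b : ℕ)] (g^[(a : ℕ)] v) :=
      Function.iterate_add_apply _ _ _ _
    have h2 : g^[k0 - (b : ℕ) + (b : ℕ)] v = g^[k0 - (b : ℕ)] (g^[(b : ℕ)] v) :=
      Function.iterate_add_apply _ _ _ _
    rw [Nat.sub_add_cancel hble] at h2
    rw [h1, heq, ← h2, hk0spec]
  have : k0 - (b : ℕ) + (a : ℕ) < k0 := by omega
  exact Nat.find_min hex this hsmall


lemma Mf_pow (f : {v : D.V // v ≠ r} → D.E) (hf : ∀ u, D.src (f u) = u.val) (k : ℕ)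
    (u w : {v : D.V // v ≠ r}) :
    ((Matrix.of fun u w : {v : D.V // v ≠ r} =>
        if D.tgt (f u) = w.val then (1:ℚ) else 0) ^ k) u w
      = if (gfun D r f)^[k] u.val = w.val then 1 else 0 := by
  set g := gfun D r f with hg
  set N := (Matrix.of fun u w : {v : D.V // v ≠ r} =>
        if D.tgt (f u) = w.val then (1:ℚ) else 0) with hN
  induction k generalizing u w with
  | zero =>
    simp only [pow_zero, Function.iterate_zero, id_eq]
    rw [Matrix.one_apply]
    by_cases h : u = w
    · rw [if_pos h]; simp [h]
    · rw [if_neg h]; have hne : (u : D.V) ≠ w := fun hc => h (Subtype.ext hc); simp [hne]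
  | succ k ih =>
    rw [pow_succ, Matrix.mul_apply]
    have hit : g^[k+1] u.val = g (g^[k] u.val) := Function.iterate_succ_apply' _ _ _
    by_cases hgr : g^[k] u.val = r
    · have hz : ∀ x : {v : D.V // v ≠ r}, (N ^ k) u x * N x w = 0 := by
        intro x
        rw [ih]
        rw [if_neg (fun hc => x.prop (by rw [← hc, hgr]))]
        ring
      rw [Finset.sum_congr rfl (fun x _ => hz x), Finset.sum_const, smul_zero]
      rw [if_neg (by rw [hit, hgr, hg, gfun_root]; exact fun hc => w.prop hc.symm)]
    · set x0 : {v : D.V // v ≠ r} := ⟨g^[k] u.val, hgr⟩ with hx0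
      rw [Finset.sum_eq_single x0]
      · rw [ih, if_pos rfl, one_mul, hN]
        have : g (g^[k] u.val) = D.tgt (f x0) := gfun_ne D r f _ hgr
        rw [hit, this]
        rfl
      · intro x _ hx
        rw [ih, if_neg (fun hc => hx (Subtype.ext hc.symm))]
        ring
      · intro hx; exact absurd (Finset.mem_univ x0) hx

lemma good_det (f : {v : D.V // v ≠ r} → D.E) (hf : ∀ u, D.src (f u) = u.val)
    (hg : Good D r f) : (Mf D r f).det = 1 := by
  set N := (Matrix.of fun u w : {v : D.V // v ≠ r} =>
        if D.tgt (f u) = w.val then (1:ℚ) else 0) with hN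
  have hMf : Mf D r f = 1 - N := by
    ext u w
    rw [Mf, Matrix.sub_apply, Matrix.one_apply]
    rfl
  have hnil : N ^ (Fintype.card D.V) = 0 := by
    ext u w
    rw [Mf_pow D r f hf]
    rw [if_neg (by rw [gfun_card D r f hg]; exact fun hc => w.prop hc.symm)]
    rfl
  rw [hMf]
  exact det_one_sub_nilpotent N ⟨_, hnil⟩


lemma bad_det (f : {v : D.V // v ≠ r} → D.E) (hf : ∀ u, D.src (f u) = u.val)
    (hg : ¬ Good D r f) : (Mf D r f).det = 0 := by
  set g := gfun D r f with hgdef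
  rw [Good] at hg
  push_neg at hg
  obtain ⟨v, hv⟩ := hg
  -- find a cycle in the orbit of v
  obtain ⟨a, b, hab, heq⟩ := Fintype.exists_ne_map_eq_of_card_lt
    (fun j : Fin (Fintype.card D.V + 1) => g^[(j : ℕ)] v) (by simp)
  wlog hlt : (a : ℕ) < (b : ℕ) generalizing a b
  · exact this b a hab.symm heq.symm
      (lt_of_le_of_ne (le_of_not_gt hlt) (fun hc => hab (Fin.ext hc.symm)))
  set p : ℕ := (b : ℕ) - (a : ℕ) with hp
  have hppos : 0 < p := by omega
  set x : D.V := g^[(a : ℕ)] v with hx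
  have hxr : ∀ k, g^[k] x ≠ r := by
    intro k
    rw [hx, ← Function.iterate_add_apply]
    exact hv _
  have hxp : g^[p] x = x := by
    rw [hx, ← Function.iterate_add_apply]
    have h2 : p + (a : ℕ) = (b : ℕ) := by omega
    rw [h2]
    exact heq.symm.trans hx
  have hfix : ∀ q, g^[p * q] x = x := by
    intro q
    rw [Function.iterate_mul]
    exact Function.iterate_fixed hxp q
  have hper : ∀ k, g^[k] x = g^[k % p] x := by
    intro k
    conv_lhs => rw [show k = k % p + p * (k / p) from (Nat.mod_add_div k p).symm]
    rw [Function.iterate_add_apply, hfix]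
  set C : Finset D.V := (Finset.range p).image (fun k => g^[k] x) with hC
  have horb : ∀ k, g^[k] x ∈ C := by
    intro k
    rw [hper]
    exact Finset.mem_image.mpr ⟨k % p, Finset.mem_range.mpr (Nat.mod_lt _ hppos), rfl⟩
  have hxC : x ∈ C := by simpa using horb 0
  have hrC : r ∉ C := by
    rw [hC]
    intro hmem
    obtain ⟨k, _, hk⟩ := Finset.mem_image.mp hmem
    exact hxr k hk
  have hfixC : ∀ y ∈ C, g^[p] y = y := by
    intro y hy
    obtain ⟨k, _, hk⟩ := Finset.mem_image.mp hy
    rw [← hk, ← Function.iterate_add_apply, Nat.add_comm, Function.iterate_add_apply, hxp]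
  have hmaps : ∀ y ∈ C, g y ∈ C := by
    intro y hy
    obtain ⟨k, _, hk⟩ := Finset.mem_image.mp hy
    have h2 : g y = g^[k+1] x := by rw [Function.iterate_succ_apply', hk]
    rw [h2]
    exact horb (k + 1)
  have hinj : ∀ y ∈ C, ∀ z ∈ C, g y = g z → y = z := by
    intro y hy z hz hgyz
    have h1 : g^[p - 1] (g y) = g^[p - 1] (g z) := by rw [hgyz]
    rw [← Function.iterate_succ_apply, ← Function.iterate_succ_apply] at h1
    have hp1 : (p - 1).succ = p := by omega
    rw [hp1] at h1
    rw [← hfixC y hy, ← hfixC z hz, h1]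
  have hsurj : Finset.image g C = C := by
    apply Finset.eq_of_subset_of_card_le
    · intro y hy
      obtain ⟨z, hz, hzy⟩ := Finset.mem_image.mp hy
      rw [← hzy]; exact hmaps z hz
    · rw [Finset.card_image_of_injOn hinj]
  -- the vanishing left kernel vector
  set c : {v : D.V // v ≠ r} → ℚ := fun u => if u.val ∈ C then 1 else 0 with hc
  have hcne : c ≠ 0 := by
    intro hzero
    have hx0 : x ≠ r := hxr 0
    have := congrFun hzero ⟨x, hx0⟩
    rw [hc] at this
    simp only [if_pos hxC, Pi.zero_apply] at this
    exact one_ne_zero this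
  have hvm : Matrix.vecMul c (Mf D r f) = 0 := by
    funext w
    have hdot : (Matrix.vecMul c (Mf D r f)) w = ∑ u, c u * (Mf D r f) u w := by
      simp [Matrix.vecMul, dotProduct]
    rw [hdot, Pi.zero_apply]
    have hterm : ∀ u : {v : D.V // v ≠ r},
        c u * (Mf D r f) u w
          = (if u = w then c u else 0)
            - (if u.val ∈ C then (if g u.val = w.val then (1:ℚ) else 0) else 0) := by
      intro u
      rw [Mf, Matrix.of_apply]
      have hgu : D.tgt (f u) = g u.val := (gfun_ne D r f u.val u.prop).symm
      rw [hgu]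
      simp only [hc]
      split_ifs <;> ring
    rw [Finset.sum_congr rfl (fun u _ => hterm u), Finset.sum_sub_distrib]
    have hfirst : ∑ u : {v : D.V // v ≠ r}, (if u = w then c u else 0) = c w := by simp
    rw [hfirst]
    have hsecond : ∑ u : {v : D.V // v ≠ r},
        (if u.val ∈ C then (if g u.val = w.val then (1:ℚ) else 0) else 0)
          = if w.val ∈ C then 1 else 0 := by
      by_cases hw : w.val ∈ C
      · have : w.val ∈ Finset.image g C := by rw [hsurj]; exact hw
        obtain ⟨y, hy, hgy⟩ := Finset.mem_image.mp this
        have hyr : y ≠ r := fun hc' => hrC (by rw [← hc']; exact hy)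
        rw [if_pos hw]
        rw [Finset.sum_eq_single (⟨y, hyr⟩ : {v : D.V // v ≠ r})]
        · rw [if_pos hy, if_pos hgy]
        · intro u _ hu
          by_cases h2 : u.val ∈ C
          · rw [if_pos h2]
            rw [if_neg (fun hc' => hu (Subtype.ext (hinj u.val h2 y hy (hc'.trans hgy.symm))))]
          · rw [if_neg h2]
        · intro h; exact absurd (Finset.mem_univ _) h
      · rw [if_neg hw]
        apply Finset.sum_eq_zero
        intro u _
        by_cases h2 : u.val ∈ C
        · rw [if_pos h2, if_neg (fun hc' => hw (by rw [← hc']; exact hmaps u.val h2))]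
        · rw [if_neg h2]
    rw [hsecond, hc]
    simp
  exact Matrix.exists_vecMul_eq_zero_iff.mp ⟨c, hcne, hvm⟩


lemma det_expand :
    ((Lap D).submatrix (Subtype.val : {v : D.V // v ≠ r} → D.V) Subtype.val).det
      = ∑ f ∈ Fintype.piFinset (S D r), (Mf D r f).det := by
  set A := (Lap D).submatrix (Subtype.val : {v : D.V // v ≠ r} → D.V) Subtype.val with hAdef
  have hA : A = fun u => ∑ e ∈ S D r u, (fun w : {v : D.V // v ≠ r} =>
      (if u = w then (1:ℚ) else 0) - (if D.tgt e = w.val then 1 else 0)) := by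
    funext u w
    rw [show (∑ e ∈ S D r u, (fun w : {v : D.V // v ≠ r} =>
      (if u = w then (1:ℚ) else 0) - (if D.tgt e = w.val then 1 else 0))) w
        = ∑ e ∈ S D r u, ((if u = w then (1:ℚ) else 0) - (if D.tgt e = w.val then 1 else 0))
      from by simp]
    rw [Finset.sum_sub_distrib, Finset.sum_const, Finset.sum_boole]
    rw [hAdef, Matrix.submatrix_apply, Lap]
    have hcard : ((S D r u).filter (fun e => D.tgt e = w.val)).card = nE D u.val w.val := by
      rw [nE, S, Finset.filter_filter]
    have hod : (S D r u).card = od D u.val := rfl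
    have hif : (if u.val = w.val then (od D u.val : ℚ) else 0)
        = (S D r u).card • (if u = w then (1:ℚ) else 0) := by
      by_cases h : u = w
      · rw [if_pos (by rw [h]), if_pos h, hod]; simp
      · rw [if_neg (fun hc => h (Subtype.ext hc)), if_neg h]; simp
    rw [hif, hcard]
  have hdet : A.det = (Matrix.detRowAlternating (R := ℚ)
      (n := {v : D.V // v ≠ r})).toMultilinearMap A := rfl
  rw [hdet, hA]
  rw [MultilinearMap.map_sum_finset]
  exact Finset.sum_congr rfl (fun f _ => rfl)


lemma good_isArb (f : {v : D.V // v ≠ r} → D.E) (hf : ∀ u, D.src (f u) = u.val)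
    (hg : Good D r f) : D.IsArborescence (Set.range f) r := by
  refine ⟨?_, ?_, ?_⟩
  · intro v hv
    refine ⟨f ⟨v, hv⟩, ⟨Set.mem_range_self _, hf _⟩, ?_⟩
    rintro e ⟨⟨u, rfl⟩, hsrc⟩
    have : u = ⟨v, hv⟩ := Subtype.ext ((hf u).symm.trans hsrc)
    rw [this]
  · rintro e ⟨u, rfl⟩
    rw [hf]; exact u.prop
  · intro v
    obtain ⟨k, hk⟩ := hg v
    induction k generalizing v with
    | zero => rw [Function.iterate_zero, id_eq] at hk; rw [hk]
    | succ k ih =>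
      by_cases hv : v = r
      · rw [hv]
      · have hstep : D.step (Set.range f) v (gfun D r f v) :=
          ⟨f ⟨v, hv⟩, Set.mem_range_self _, hf _, (gfun_ne D r f v hv).symm⟩
        have hk' : (gfun D r f)^[k] (gfun D r f v) = r := by
          rw [← Function.iterate_succ_apply]; exact hk
        exact Relation.ReflTransGen.head hstep (ih _ hk')

lemma arb_exists (T : Set D.E) (hT : D.IsArborescence T r) :
    ∃ f : {v : D.V // v ≠ r} → D.E,
      (∀ u, D.src (f u) = u.val) ∧ Good D r f ∧ T = Set.range f := by
  obtain ⟨h1, h2, h3⟩ := hT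
  have hsel : ∀ u : {v : D.V // v ≠ r},
      ∃ e, (e ∈ T ∧ D.src e = u.val) ∧ ∀ e', (e' ∈ T ∧ D.src e' = u.val) → e' = e := by
    intro u
    obtain ⟨e, he, hun⟩ := h1 u.val u.prop
    exact ⟨e, he, hun⟩
  choose f hf1 hf2 using hsel
  have hsrc : ∀ u, D.src (f u) = u.val := fun u => (hf1 u).2
  have hmem : ∀ u, f u ∈ T := fun u => (hf1 u).1
  have hTeq : T = Set.range f := by
    ext e
    constructor
    · intro he
      have hne : D.src e ≠ r := h2 e he
      exact ⟨⟨D.src e, hne⟩, (hf2 ⟨D.src e, hne⟩ e ⟨he, rfl⟩).symm⟩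
    · rintro ⟨u, rfl⟩
      exact hmem u
  refine ⟨f, hsrc, ?_, hTeq⟩
  intro v
  have hreach := h3 v
  induction hreach using Relation.ReflTransGen.head_induction_on with
  | refl => exact ⟨0, rfl⟩
  | head hstep hrest ih =>
    rename_i a c
    by_cases har : a = r
    · exact ⟨0, har⟩
    · obtain ⟨e, heT, hesrc, hetgt⟩ := hstep
      have hef : e = f ⟨a, har⟩ := hf2 ⟨a, har⟩ e ⟨heT, hesrc⟩
      have hga : gfun D r f a = c := by
        rw [gfun_ne D r f a har, ← hef, hetgt]
      obtain ⟨k, hk⟩ := ih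
      exact ⟨k + 1, by rw [Function.iterate_succ_apply, hga, hk]⟩

lemma range_inj (f f' : {v : D.V // v ≠ r} → D.E)
    (hf : ∀ u, D.src (f u) = u.val) (hf' : ∀ u, D.src (f' u) = u.val)
    (h : Set.range f = Set.range f') : f = f' := by
  funext u
  have hmem : f u ∈ Set.range f' := h ▸ Set.mem_range_self u
  obtain ⟨u', hu'⟩ := hmem
  have huu : u' = u := Subtype.ext (by rw [← hf' u', hu', hf u])
  rw [← hu', huu]

lemma count_det :
    ((D.arbCount r : ℚ)) =
      ((Lap D).submatrix (Subtype.val : {v : D.V // v ≠ r} → D.V) Subtype.val).det := by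
  classical
  rw [det_expand]
  have hsum : ∑ f ∈ Fintype.piFinset (S D r), (Mf D r f).det
      = ∑ f ∈ Fintype.piFinset (S D r), (if Good D r f then (1:ℚ) else 0) := by
    apply Finset.sum_congr rfl
    intro f hf
    have hsrc : ∀ u, D.src (f u) = u.val := by
      intro u
      have := (Fintype.mem_piFinset.mp hf) u
      rw [S] at this
      simpa using this
    by_cases hg : Good D r f
    · rw [good_det D r f hsrc hg, if_pos hg]
    · rw [bad_det D r f hsrc hg, if_neg hg]
  rw [hsum, Finset.sum_boole]
  set Fs := (Fintype.piFinset (S D r)).filter (fun f => Good D r f) with hFs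
  have hcount : D.arbCount r = Fs.card := by
    rw [Multidigraph.arbCount]
    have hsrcmem : ∀ f ∈ Fs, ∀ u : {v : D.V // v ≠ r}, D.src (f u) = u.val := by
      intro f hfm u
      have := (Fintype.mem_piFinset.mp (Finset.mem_filter.mp hfm).1) u
      rw [S] at this
      simpa using this
    have hset : {T : Set D.E | D.IsArborescence T r}
        = (fun f : {v : D.V // v ≠ r} → D.E => Set.range f) '' ↑Fs := by
      ext T
      constructor
      · intro hT
        obtain ⟨f, hsrc, hg, hTeq⟩ := arb_exists D r T hT
        refine ⟨f, ?_, hTeq.symm⟩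
        rw [Finset.mem_coe, hFs, Finset.mem_filter]
        refine ⟨Fintype.mem_piFinset.mpr (fun u => ?_), hg⟩
        rw [S, Finset.mem_filter]
        exact ⟨Finset.mem_univ _, hsrc u⟩
      · rintro ⟨f, hfm, rfl⟩
        have hg : Good D r f := (Finset.mem_filter.mp (Finset.mem_coe.mp hfm)).2
        exact good_isArb D r f (hsrcmem f (Finset.mem_coe.mp hfm)) hg
    rw [hset, Set.ncard_image_of_injOn, Set.ncard_coe_finset]
    intro f hfm f' hfm' heq
    exact range_inj D r f f' (hsrcmem f (Finset.mem_coe.mp hfm))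
      (hsrcmem f' (Finset.mem_coe.mp hfm')) heq
  rw [hcount]

end ArbAux



/-- For a connected Eulerian (balanced) directed multigraph
`D`, the number of spanning arborescences rooted at `r` is the same for every
choice of the root vertex `r`. -/
theorem arborescence_count_root_independent (D : Multidigraph)
    (hconn : D.Connected) (hbal : D.Balanced) (r r' : D.V) :
    D.arbCount r = D.arbCount r' := by
  have h1 := ArbAux.count_det D r
  have h2 := ArbAux.count_det D r'
  have h3 := cofactor_indep (ArbAux.Lap D) (ArbAux.Lap_row_sum D)
    (ArbAux.Lap_col_sum D hbal) r r'
  have : (D.arbCount r : ℚ) = (D.arbCount r' : ℚ) := by rw [h1, h2, h3]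
  exact_mod_cast this
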